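/- Let F be a field of characteristic different from 2 and let G be a finite group whose order is invertible in F. Let V₁ and V₂ be finite-dimensional F-vector spaces with non-degenerate quadratic forms, each equipped with an action of G by isometries. Let x₁ ∈ V₁^G and x₂ ∈ V₂^G be G-fixed vectors with ⟨x₁,x₁⟩ = ⟨x₂,x₂⟩ ≠ 0, and set U₁ = (F·x₁)^⊥ ⊆ V₁ and U₂ = (F·x₂)^⊥ ⊆ V₂ (these are G-stable subspaces). If there exists a G-equivariant isometry between V₁ and V₂, then there exists a G-equivariant isometry between U₁ and U₂ (each with the restricted quadratic form and G-action). -/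

import Mathlib

open QuadraticMap

private lemma refl_exists {F V G : Type*} [Field F] [AddCommGroup V] [Module F V] [Group G]
    (Q : QuadraticForm F V) (ρ : Representation F G V)
    (hisom : ∀ (g : G) (v : V), Q (ρ g v) = Q v)
    (w : V) (hw : Q w ≠ 0) (hwfix : ∀ g : G, ρ g w = w) :
    ∃ τ : V ≃ₗ[F] V, (∀ v, Q (τ v) = Q v) ∧ (∀ (g : G) (v : V), τ (ρ g v) = ρ g (τ v)) ∧
      (∀ v, τ v = v - ((Q w)⁻¹ * polar Q v w) • w) := by
  set f : V →ₗ[F] F := (Q w)⁻¹ • (Q.polarBilin.flip w) with hfdef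
  have hfv : ∀ v, f v = (Q w)⁻¹ * polar Q v w := by
    intro v
    simp [hfdef, polarBilin_apply_apply]
  have hfw : f w = 2 := by
    rw [hfv, polar_self, two_nsmul]
    field_simp
    ring
  have happ : ∀ v, Module.reflection hfw v = v - ((Q w)⁻¹ * polar Q v w) • w := by
    intro v; rw [Module.reflection_apply, hfv]
  refine ⟨Module.reflection hfw, ?_, ?_, happ⟩
  · intro v
    rw [happ]
    have key : ∀ a b : V, Q (a + b) = Q a + Q b + polar Q a b := by
      intro a b; simp only [polar]; ring
    have h1 : Q (v - ((Q w)⁻¹ * polar Q v w) • w)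
        = Q v + Q (((Q w)⁻¹ * polar Q v w) • w) - ((Q w)⁻¹ * polar Q v w) * polar Q v w := by
      rw [sub_eq_add_neg, key, Q.map_neg, polar_neg_right, polar_smul_right]
      ring_nf
    rw [h1, Q.map_smul, smul_eq_mul]
    field_simp
    ring
  · intro g v
    have hpol : polar Q (ρ g v) w = polar Q v w := by
      have : polar Q (ρ g v) (ρ g w) = polar Q v w := by
        simp only [polar, ← map_add (ρ g), hisom]
      rwa [hwfix g] at this
    rw [happ, happ, hpol, _root_.map_sub, _root_.map_smul, hwfix]

/-- **Equivariant Witt cancellation, rank-one case.** Let `F` be a field of characteristic `≠ 2`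
and `G` a finite group with `|G|` invertible in `F`. Let `V₁, V₂` be finite-dimensional
non-degenerate quadratic spaces over `F` with `G` acting by isometries. Let `x₁ ∈ V₁^G` and
`x₂ ∈ V₂^G` be `G`-fixed vectors with `⟨x₁,x₁⟩ = ⟨x₂,x₂⟩ ≠ 0` and let `U₁ = (F·x₁)^⊥`,
`U₂ = (F·x₂)^⊥`. If `V₁` and `V₂` are `G`-equivariantly isometric, then so are `U₁` and `U₂`. -/
theorem equivariant_witt_cancellation_rank_one
    {F G : Type*} [Field F] [Group G] [Fintype G]
    (hchar : ringChar F ≠ 2)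
    (hcard : (Fintype.card G : F) ≠ 0)
    {V₁ V₂ : Type*} [AddCommGroup V₁] [Module F V₁] [FiniteDimensional F V₁]
    [AddCommGroup V₂] [Module F V₂] [FiniteDimensional F V₂]
    (Q₁ : QuadraticForm F V₁) (Q₂ : QuadraticForm F V₂)
    (hnd₁ : ∀ x : V₁, (∀ y : V₁, Q₁.polarBilin x y = 0) → x = 0)
    (hnd₂ : ∀ x : V₂, (∀ y : V₂, Q₂.polarBilin x y = 0) → x = 0)
    (ρ₁ : Representation F G V₁) (ρ₂ : Representation F G V₂)
    (hisom₁ : ∀ (g : G) (v : V₁), Q₁ (ρ₁ g v) = Q₁ v)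
    (hisom₂ : ∀ (g : G) (v : V₂), Q₂ (ρ₂ g v) = Q₂ v)
    (x₁ : V₁) (x₂ : V₂)
    (hx₁ : ∀ g : G, ρ₁ g x₁ = x₁) (hx₂ : ∀ g : G, ρ₂ g x₂ = x₂)
    (hxx : Q₁.polarBilin x₁ x₁ = Q₂.polarBilin x₂ x₂)
    (hne : Q₁.polarBilin x₁ x₁ ≠ 0)
    -- U₁ = (F·x₁)^⊥ and U₂ = (F·x₂)^⊥
    (U₁ : Submodule F V₁) (U₂ : Submodule F V₂)
    (hU₁ : ∀ v : V₁, v ∈ U₁ ↔ ∀ w ∈ Submodule.span F {x₁}, Q₁.polarBilin v w = 0)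
    (hU₂ : ∀ v : V₂, v ∈ U₂ ↔ ∀ w ∈ Submodule.span F {x₂}, Q₂.polarBilin v w = 0)
    -- a G-equivariant isometry between V₁ and V₂
    (hVisom : ∃ e : V₁ ≃ₗ[F] V₂,
      (∀ v : V₁, Q₂ (e v) = Q₁ v) ∧ (∀ (g : G) (v : V₁), e (ρ₁ g v) = ρ₂ g (e v))) :
    -- conclusion: U₁ and U₂ are G-equivariantly isometric
    ∃ φ : U₁ ≃ₗ[F] U₂,
      (∀ u : U₁, Q₂ (φ u : V₂) = Q₁ (u : V₁)) ∧
      (∀ (g : G) (u : U₁) (hu : ρ₁ g (u : V₁) ∈ U₁),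
        (φ ⟨ρ₁ g (u : V₁), hu⟩ : V₂) = ρ₂ g (φ u : V₂)) := by
  obtain ⟨e, heq, heg⟩ := hVisom
  have h2 : (2 : F) ≠ 0 := Ring.two_ne_zero hchar
  set y := e x₁ with hy
  have hQy : Q₂ y = Q₁ x₁ := heq x₁
  have hyfix : ∀ g, ρ₂ g y = y := fun g => by rw [hy, ← heg, hx₁]
  have hp1 : Q₁.polarBilin x₁ x₁ = 2 * Q₁ x₁ := by
    rw [polarBilin_apply_apply, polar_self, two_nsmul, two_mul]
  have hp2 : Q₂.polarBilin x₂ x₂ = 2 * Q₂ x₂ := by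
    rw [polarBilin_apply_apply, polar_self, two_nsmul, two_mul]
  have hQ12 : Q₁ x₁ = Q₂ x₂ := by
    have := hxx; rw [hp1, hp2] at this
    exact mul_left_cancel₀ h2 this
  have hQx₂ : Q₂ x₂ ≠ 0 := by
    intro h; apply hne; rw [hp1, hQ12, h, mul_zero]
  have hQyx : Q₂ y = Q₂ x₂ := hQy.trans hQ12
  -- key polarization identity
  have key : ∀ a b : V₂, Q₂ (a + b) = Q₂ a + Q₂ b + polar Q₂ a b := by
    intro a b; simp only [polar]; ring
  have hsub : Q₂ (y - x₂) = 2 * Q₂ x₂ - polar Q₂ y x₂ := by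
    rw [sub_eq_add_neg, key, Q₂.map_neg, polar_neg_right, hQyx]; ring
  have hadd : Q₂ (y + x₂) = 2 * Q₂ x₂ + polar Q₂ y x₂ := by
    rw [key, hQyx]; ring
  -- obtain an equivariant isometry of V₂ sending y to x₂
  obtain ⟨σ, hσq, hσg, hσy⟩ : ∃ σ : V₂ ≃ₗ[F] V₂,
      (∀ v, Q₂ (σ v) = Q₂ v) ∧ (∀ (g : G) (v : V₂), σ (ρ₂ g v) = ρ₂ g (σ v)) ∧ σ y = x₂ := by
    by_cases hcase : Q₂ (y - x₂) ≠ 0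
    · obtain ⟨τ, hτq, hτg, hτapp⟩ := refl_exists Q₂ ρ₂ hisom₂ (y - x₂) hcase
        (fun g => by rw [_root_.map_sub, hyfix, hx₂])
      refine ⟨τ, hτq, hτg, ?_⟩
      have hpy : polar Q₂ y (y - x₂) = Q₂ (y - x₂) := by
        rw [polar_sub_right, polar_self, two_nsmul, hsub, hQyx]; ring
      rw [hτapp, hpy, inv_mul_cancel₀ hcase, one_smul]
      abel
    · push_neg at hcase
      have hadd' : Q₂ (y + x₂) ≠ 0 := by
        intro h
        apply hQx₂
        have : (4 : F) * Q₂ x₂ = 0 := by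
          rw [show (4:F) * Q₂ x₂ = (2 * Q₂ x₂ - polar Q₂ y x₂) + (2 * Q₂ x₂ + polar Q₂ y x₂) by ring,
            ← hsub, ← hadd, hcase, h, add_zero]
        have h4 : (4 : F) ≠ 0 := by
          have : (4 : F) = 2 * 2 := by norm_num
          rw [this]; exact mul_ne_zero h2 h2
        exact (mul_eq_zero.mp this).resolve_left h4
      obtain ⟨τ, hτq, hτg, hτapp⟩ := refl_exists Q₂ ρ₂ hisom₂ (y + x₂) hadd'
        (fun g => by rw [_root_.map_add, hyfix, hx₂])
      obtain ⟨τ', hτ'q, hτ'g, hτ'app⟩ := refl_exists Q₂ ρ₂ hisom₂ x₂ hQx₂ hx₂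
      refine ⟨τ.trans τ', fun v => by simp [hτ'q, hτq], fun g v => by simp [hτg, hτ'g], ?_⟩
      have hτy : τ y = -x₂ := by
        have hpy : polar Q₂ y (y + x₂) = Q₂ (y + x₂) := by
          rw [polar_add_right, polar_self, two_nsmul, hadd, hQyx]; ring
        rw [hτapp, hpy, inv_mul_cancel₀ hadd', one_smul]
        abel
      have hτ'x : τ' (-x₂) = x₂ := by
        have hc : (Q₂ x₂)⁻¹ * -(Q₂ x₂ + Q₂ x₂) = -2 := by
          field_simp
          ring
        rw [hτ'app, polar_neg_left, polar_self, two_nsmul, hc, neg_smul, sub_neg_eq_add, two_smul]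
        abel
      simp [hτy, hτ'x]
  -- the composite equivariant isometry V₁ → V₂ sending x₁ to x₂
  set f : V₁ ≃ₗ[F] V₂ := e.trans σ with hfdef
  have hfq : ∀ v, Q₂ (f v) = Q₁ v := fun v => by simp [hfdef, hσq, heq]
  have hfg : ∀ (g : G) (v : V₁), f (ρ₁ g v) = ρ₂ g (f v) := fun g v => by
    simp [hfdef, heg, hσg]
  have hfx : f x₁ = x₂ := by simp [hfdef, ← hy, hσy]
  -- membership transfer
  have hB : ∀ v : V₁, Q₂.polarBilin (f v) x₂ = Q₁.polarBilin v x₁ := by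
    intro v
    rw [← hfx]
    simp only [polarBilin_apply_apply, polar, ← map_add f, hfq]
  have hmem : ∀ v : V₁, v ∈ U₁ ↔ f v ∈ U₂ := by
    intro v
    rw [hU₁ v, hU₂ (f v)]
    have h1 : (∀ w ∈ Submodule.span F {x₁}, Q₁.polarBilin v w = 0) ↔ Q₁.polarBilin v x₁ = 0 := by
      constructor
      · exact fun h => h x₁ (Submodule.mem_span_singleton_self x₁)
      · intro h w hw
        obtain ⟨c, rfl⟩ := Submodule.mem_span_singleton.mp hw
        simp [h]
    have h2' : (∀ w ∈ Submodule.span F {x₂}, Q₂.polarBilin (f v) w = 0) ↔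
        Q₂.polarBilin (f v) x₂ = 0 := by
      constructor
      · exact fun h => h x₂ (Submodule.mem_span_singleton_self x₂)
      · intro h w hw
        obtain ⟨c, rfl⟩ := Submodule.mem_span_singleton.mp hw
        simp [h]
    rw [h1, h2', hB]
  have hmap : U₁.map (f : V₁ →ₗ[F] V₂) = U₂ := by
    ext z
    simp only [Submodule.mem_map]
    constructor
    · rintro ⟨u, hu, rfl⟩
      exact (hmem u).1 hu
    · intro hz
      refine ⟨f.symm z, (hmem _).2 ?_, f.apply_symm_apply z⟩
      rwa [f.apply_symm_apply]
  refine ⟨f.ofSubmodules U₁ U₂ hmap, ?_, ?_⟩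
  · intro u
    rw [LinearEquiv.ofSubmodules_apply]
    exact hfq u
  · intro g u hu
    rw [LinearEquiv.ofSubmodules_apply, LinearEquiv.ofSubmodules_apply]
    exact hfg g u
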